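/- For each ε ∈ {1, −1} and all X, Y ∈ W one has Ω̃(Ĵ^ε X, Ĵ^ε Y) = Ω̃(X, Y), where Ω̃(X, Y) := Tr(ρ·(X·Y − Y·X)). (The natural almost complex structures are compatible with the 2-form ω.) -/
import Mathlib


open Matrix

/-- The standard complex structure matrix `J = [[0, -Id_n],[Id_n, 0]]`. -/
noncomputable def Jmat (n : ℕ) : Matrix (Fin n ⊕ Fin n) (Fin n ⊕ Fin n) ℝ :=
  Matrix.fromBlocks 0 (-1) 1 0

/-- The matrix `ρ = [[0,0],[0,J]]` with block sizes `k` and `2n`. -/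
noncomputable def rhoMat (k n : ℕ) :
    Matrix (Fin k ⊕ (Fin n ⊕ Fin n)) (Fin k ⊕ (Fin n ⊕ Fin n)) ℝ :=
  Matrix.fromBlocks 0 0 0 (Jmat n)

/-- The subspace `W = 𝔤₋₁^σ ⊕ 𝔭` : matrices `[[0,B],[B',C]]` with `CJ + JC = 0`. -/
def Wset (k n : ℕ) : Set (Matrix (Fin k ⊕ (Fin n ⊕ Fin n)) (Fin k ⊕ (Fin n ⊕ Fin n)) ℝ) :=
  {X | ∃ (B : Matrix (Fin k) (Fin n ⊕ Fin n) ℝ) (B' : Matrix (Fin n ⊕ Fin n) (Fin k) ℝ)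
    (C : Matrix (Fin n ⊕ Fin n) (Fin n ⊕ Fin n) ℝ),
    C * Jmat n + Jmat n * C = 0 ∧ X = Matrix.fromBlocks 0 B B' C}

/-- The map `Ĵ^ε : [[A,B],[B',C]] ↦ [[0, −B·J],[J·B', ε·(J·C − C·J)/2]]`. -/
noncomputable def Jhat (k n : ℕ) (ε : ℝ)
    (X : Matrix (Fin k ⊕ (Fin n ⊕ Fin n)) (Fin k ⊕ (Fin n ⊕ Fin n)) ℝ) :
    Matrix (Fin k ⊕ (Fin n ⊕ Fin n)) (Fin k ⊕ (Fin n ⊕ Fin n)) ℝ :=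
  Matrix.fromBlocks 0 (-(X.toBlocks₁₂ * Jmat n)) (Jmat n * X.toBlocks₂₁)
    ((ε / 2) • (Jmat n * X.toBlocks₂₂ - X.toBlocks₂₂ * Jmat n))

/-- The bilinear form `Ω̃(X,Y) = Tr(ρ·(XY − YX))`. -/
noncomputable def OmegaForm (k n : ℕ)
    (X Y : Matrix (Fin k ⊕ (Fin n ⊕ Fin n)) (Fin k ⊕ (Fin n ⊕ Fin n)) ℝ) : ℝ :=
  Matrix.trace (rhoMat k n * (X * Y - Y * X))

lemma traceFB {p q : Type*} [Fintype p] [Fintype q]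
    (A : Matrix p p ℝ) (B : Matrix p q ℝ) (C : Matrix q p ℝ) (D : Matrix q q ℝ) :
    (Matrix.fromBlocks A B C D).trace = A.trace + D.trace := by
  simp [Matrix.trace, Matrix.diag, Fintype.sum_sum_type, Matrix.fromBlocks]

lemma JmatSq (n : ℕ) : Jmat n * Jmat n = -1 := by
  have h : (-1 : Matrix (Fin n ⊕ Fin n) (Fin n ⊕ Fin n) ℝ) = Matrix.fromBlocks (-1) 0 0 (-1) := by
    rw [← Matrix.fromBlocks_one, Matrix.fromBlocks_neg]; simp
  simp [Jmat, Matrix.fromBlocks_multiply, h]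

lemma fromBlocks_sub' {p q : Type*} [Fintype p] [Fintype q]
    (A A' : Matrix p p ℝ) (B B' : Matrix p q ℝ) (C C' : Matrix q p ℝ) (D D' : Matrix q q ℝ) :
    Matrix.fromBlocks A B C D - Matrix.fromBlocks A' B' C' D' =
      Matrix.fromBlocks (A - A') (B - B') (C - C') (D - D') := by
  simp only [sub_eq_add_neg, Matrix.fromBlocks_neg, Matrix.fromBlocks_add]

lemma omega_blocks (k n : ℕ) (B D : Matrix (Fin k) (Fin n ⊕ Fin n) ℝ)
    (B' D' : Matrix (Fin n ⊕ Fin n) (Fin k) ℝ)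
    (C E : Matrix (Fin n ⊕ Fin n) (Fin n ⊕ Fin n) ℝ) :
    OmegaForm k n (Matrix.fromBlocks 0 B B' C) (Matrix.fromBlocks 0 D D' E) =
      Matrix.trace (Jmat n * (B' * D)) + Matrix.trace (Jmat n * (C * E))
      - Matrix.trace (Jmat n * (D' * B)) - Matrix.trace (Jmat n * (E * C)) := by
  simp only [OmegaForm, rhoMat, Matrix.fromBlocks_multiply, fromBlocks_sub', traceFB]
  simp [Matrix.mul_sub, Matrix.mul_add]
  ring

theorem omega_compatible_with_Jhat (k n : ℕ) (hk : 0 < k) (hn : 0 < n)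
    (ε : ℝ) (hε : ε = 1 ∨ ε = -1)
    (X Y : Matrix (Fin k ⊕ (Fin n ⊕ Fin n)) (Fin k ⊕ (Fin n ⊕ Fin n)) ℝ)
    (hX : X ∈ Wset k n) (hY : Y ∈ Wset k n) :
    OmegaForm k n (Jhat k n ε X) (Jhat k n ε Y) = OmegaForm k n X Y := by
  obtain ⟨B, B', C, hC, rfl⟩ := hX
  obtain ⟨D, D', E, hE, rfl⟩ := hY
  have hε2 : ε * ε = 1 := by rcases hε with h | h <;> rw [h] <;> norm_num
  set J := Jmat n with hJdef
  have hJJ : J * J = -1 := JmatSq n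
  have hCJ : C * J = -(J * C) := eq_neg_of_add_eq_zero_left hC
  have hEJ : E * J = -(J * E) := eq_neg_of_add_eq_zero_left hE
  have hXhat : Jhat k n ε (Matrix.fromBlocks 0 B B' C) =
      Matrix.fromBlocks 0 (-(B * J)) (J * B') (ε • (J * C)) := by
    simp only [Jhat, Matrix.toBlocks_fromBlocks₁₂, Matrix.toBlocks_fromBlocks₂₁,
      Matrix.toBlocks_fromBlocks₂₂]
    congr 1
    rw [hCJ]
    rw [sub_neg_eq_add, ← two_smul ℝ (J * C), smul_smul]
    congr 1
    ring
  have hYhat : Jhat k n ε (Matrix.fromBlocks 0 D D' E) =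
      Matrix.fromBlocks 0 (-(D * J)) (J * D') (ε • (J * E)) := by
    simp only [Jhat, Matrix.toBlocks_fromBlocks₁₂, Matrix.toBlocks_fromBlocks₂₁,
      Matrix.toBlocks_fromBlocks₂₂]
    congr 1
    rw [hEJ]
    rw [sub_neg_eq_add, ← two_smul ℝ (J * E), smul_smul]
    congr 1
    ring
  rw [hXhat, hYhat, omega_blocks, omega_blocks]
  have key : ∀ (P : Matrix (Fin n ⊕ Fin n) (Fin k) ℝ) (Q : Matrix (Fin k) (Fin n ⊕ Fin n) ℝ),
      Matrix.trace (J * ((J * P) * (-(Q * J)))) = Matrix.trace (J * (P * Q)) := by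
    intro P Q
    rw [show J * ((J * P) * (-(Q * J))) = -((J * J) * (P * (Q * J))) by
      simp only [Matrix.mul_neg, Matrix.mul_assoc], hJJ]
    simp only [Matrix.neg_mul, Matrix.one_mul, neg_neg]
    rw [← Matrix.mul_assoc, Matrix.trace_mul_comm]
  have t2 : J * ((ε • (J * C)) * (ε • (J * E))) = J * (C * E) := by
    rw [smul_mul_smul_comm, hε2, one_smul]
    rw [show J * (J * C * (J * E)) = (J * J) * ((C * J) * E) by noncomm_ring, hJJ, hCJ]
    noncomm_ring
  have t4 : J * ((ε • (J * E)) * (ε • (J * C))) = J * (E * C) := by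
    rw [smul_mul_smul_comm, hε2, one_smul]
    rw [show J * (J * E * (J * C)) = (J * J) * ((E * J) * C) by noncomm_ring, hJJ, hEJ]
    noncomm_ring
  rw [key B' D, key D' B, t2, t4]
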